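/- Let X₁, …, Xₘ be i.i.d. nonnegative NBU random variables with common mean E[X] ∈ (0, ∞) and with E[min_{l=1..m} X_l] > 0. Then 1 / E[min_{l=1..m} X_l] ≤ m / E[X]. -/

import Mathlib

open MeasureTheory ProbabilityTheory

/-- For i.i.d. nonnegative NBU random variables `X 0, …, X (m-1)` with positive finite mean
and positive mean minimum, `1 / E[min_l X_l] ≤ m / E[X]`. -/
theorem stmt_1
    {Ω : Type*} [MeasurableSpace Ω] (μ : Measure Ω) [IsProbabilityMeasure μ]
    (m : ℕ) (hm : 0 < m) (X : Fin m → Ω → ℝ)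
    (hmeas : ∀ l, Measurable (X l))
    (hnonneg : ∀ l, ∀ᵐ ω ∂μ, 0 ≤ X l ω)
    (hindep : iIndepFun X μ)
    (hident : ∀ l, Measure.map (X l) μ = Measure.map (X ⟨0, hm⟩) μ)
    (hNBU : ∀ τ t : ℝ, 0 ≤ τ → 0 ≤ t →
      μ {ω | X ⟨0, hm⟩ ω > τ + t} ≤ μ {ω | X ⟨0, hm⟩ ω > τ} * μ {ω | X ⟨0, hm⟩ ω > t})
    (hint : Integrable (X ⟨0, hm⟩) μ)
    (hmean_pos : 0 < ∫ ω, X ⟨0, hm⟩ ω ∂μ)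
    (hint_min : Integrable (fun ω => Finset.univ.inf' (Finset.univ_nonempty_iff.mpr
      ⟨⟨0, hm⟩⟩) (fun l => X l ω)) μ)
    (hmin_pos : 0 < ∫ ω, Finset.univ.inf' (Finset.univ_nonempty_iff.mpr
      ⟨⟨0, hm⟩⟩) (fun l => X l ω) ∂μ) :
    1 / (∫ ω, Finset.univ.inf' (Finset.univ_nonempty_iff.mpr
      ⟨⟨0, hm⟩⟩) (fun l => X l ω) ∂μ)
      ≤ (m : ℝ) / (∫ ω, X ⟨0, hm⟩ ω ∂μ) := by
  set Y : Ω → ℝ := fun ω => Finset.univ.inf' (Finset.univ_nonempty_iff.mpr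
      ⟨⟨0, hm⟩⟩) (fun l => X l ω) with hYdef
  set x0 : Ω → ℝ := X ⟨0, hm⟩ with hx0def
  set g : ℝ → ℝ := fun t => (μ {ω | t < x0 ω}).toReal with hgdef
  have hm0 : ((m : ℝ)) ≠ 0 := Nat.cast_ne_zero.mpr hm.ne'
  have hmR : (0:ℝ) < m := Nat.cast_pos.mpr hm
  -- g is antitone, hence measurable
  have hg_anti : Antitone g := by
    intro s t hst
    exact ENNReal.toReal_mono (measure_ne_top μ _)
      (measure_mono (fun ω h => lt_of_le_of_lt hst h))
  have hg_meas : Measurable g := hg_anti.measurable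
  -- NBU implies power bound on the survival function
  have hpow : ∀ (n : ℕ) (t : ℝ), 0 ≤ t →
      μ {ω | ((n:ℝ)+1) * t < x0 ω} ≤ μ {ω | t < x0 ω} ^ (n+1) := by
    intro n
    induction n with
    | zero =>
      intro t ht
      simp
    | succ n ih =>
      intro t ht
      have h1 := hNBU (((n:ℝ)+1) * t) t (by positivity) ht
      have hseteq : {ω | (((n+1:ℕ):ℝ)+1) * t < x0 ω} = {ω | x0 ω > ((n:ℝ)+1) * t + t} := by
        ext ω
        rw [Set.mem_setOf_eq, Set.mem_setOf_eq, gt_iff_lt]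
        constructor <;> intro h <;> [skip; skip] <;> push_cast at * <;> linarith
      calc μ {ω | (((n+1:ℕ):ℝ)+1) * t < x0 ω}
          = μ {ω | x0 ω > ((n:ℝ)+1) * t + t} := by rw [hseteq]
        _ ≤ μ {ω | x0 ω > ((n:ℝ)+1) * t} * μ {ω | x0 ω > t} := h1
        _ ≤ μ {ω | t < x0 ω} ^ (n+1) * μ {ω | t < x0 ω} :=
            mul_le_mul_left (ih t ht) _
        _ = μ {ω | t < x0 ω} ^ (n+1+1) := by ring
  -- key pointwise inequality
  have hkey : ∀ t : ℝ, 0 < t → g ((m:ℝ) * t) ≤ g t ^ m := by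
    intro t ht
    have hcast : ((m-1:ℕ):ℝ) + 1 = (m:ℝ) := by
      rw [Nat.cast_sub hm]
      push_cast
      ring
    have h1 := hpow (m-1) t ht.le
    rw [hcast, Nat.sub_add_cancel hm] at h1
    calc g ((m:ℝ) * t) ≤ (μ {ω | t < x0 ω} ^ m).toReal :=
          ENNReal.toReal_mono (ENNReal.pow_ne_top (measure_ne_top μ _)) h1
      _ = g t ^ m := by rw [ENNReal.toReal_pow]
  -- survival function of the minimum
  have hmin_surv : ∀ t : ℝ, μ {ω | t < Y ω} = μ {ω | t < x0 ω} ^ m := by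
    intro t
    have hseteq : {ω | t < Y ω} = ⋂ l, X l ⁻¹' (Set.Ioi t) := by
      ext ω
      simp [hYdef, Finset.lt_inf'_iff, Set.mem_iInter, Set.mem_preimage, Set.mem_Ioi]
    rw [hseteq, hindep.meas_iInter (fun l => ⟨Set.Ioi t, measurableSet_Ioi, rfl⟩)]
    have heach : ∀ l, μ (X l ⁻¹' Set.Ioi t) = μ {ω | t < x0 ω} := by
      intro l
      rw [← Measure.map_apply (hmeas l) measurableSet_Ioi, hident l,
        Measure.map_apply (hmeas _) measurableSet_Ioi]
      rfl
    simp_rw [heach]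
    simp [Finset.prod_const, Finset.card_univ]
  -- layer cake for X and for Y
  have hnn0 : 0 ≤ᵐ[μ] x0 := hnonneg _
  have hEX : ∫ ω, x0 ω ∂μ = ∫ t in Set.Ioi 0, g t :=
    hint.integral_eq_integral_meas_lt hnn0
  have hY_nn : 0 ≤ᵐ[μ] Y := by
    filter_upwards [ae_all_iff.mpr hnonneg] with ω h
    exact Finset.le_inf' _ _ (fun l _ => h l)
  have hEY : ∫ ω, Y ω ∂μ = ∫ t in Set.Ioi 0, g t ^ m := by
    rw [hint_min.integral_eq_integral_meas_lt hY_nn]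
    apply setIntegral_congr_fun measurableSet_Ioi
    intro t _
    show (μ {a | t < Y a}).toReal = g t ^ m
    rw [hmin_surv t, ENNReal.toReal_pow]
  -- integrability of the layer cake integrands
  have hg_nn : ∀ t, 0 ≤ g t := fun t => ENNReal.toReal_nonneg
  have hg_int : IntegrableOn g (Set.Ioi 0) := by
    refine ⟨hg_meas.aestronglyMeasurable.restrict, ?_⟩
    rw [hasFiniteIntegral_iff_ofReal (Filter.Eventually.of_forall hg_nn)]
    have hlc := lintegral_eq_lintegral_meas_lt μ hnn0 hint.aemeasurable
    have : ∫⁻ t in Set.Ioi 0, ENNReal.ofReal (g t)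
        = ∫⁻ t in Set.Ioi 0, μ {a | t < x0 a} := by
      apply lintegral_congr
      intro t
      exact ENNReal.ofReal_toReal (measure_ne_top μ _)
    rw [this, ← hlc]
    exact hint.lintegral_lt_top
  have hgm_int : IntegrableOn (fun t => g t ^ m) (Set.Ioi 0) := by
    refine ⟨((hg_meas.pow_const m).aestronglyMeasurable).restrict, ?_⟩
    rw [hasFiniteIntegral_iff_ofReal (Filter.Eventually.of_forall fun t => by positivity)]
    have hlc := lintegral_eq_lintegral_meas_lt μ hY_nn hint_min.aemeasurable
    have : ∫⁻ t in Set.Ioi 0, ENNReal.ofReal (g t ^ m)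
        = ∫⁻ t in Set.Ioi 0, μ {a | t < Y a} := by
      apply lintegral_congr
      intro t
      rw [hmin_surv t, ← ENNReal.toReal_pow]
      exact ENNReal.ofReal_toReal (ENNReal.pow_ne_top (measure_ne_top μ _))
    rw [this, ← hlc]
    exact hint_min.lintegral_lt_top
  have hcomp_meas : Measurable (fun t : ℝ => g ((m:ℝ) * t)) :=
    hg_meas.comp (measurable_const_mul _)
  have hcomp_int : IntegrableOn (fun t => g ((m:ℝ) * t)) (Set.Ioi 0) := by
    apply Integrable.mono' hgm_int hcomp_meas.aestronglyMeasurable.restrict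
    rw [ae_restrict_iff' measurableSet_Ioi]
    filter_upwards with t ht
    rw [Real.norm_eq_abs, abs_of_nonneg (hg_nn _)]
    exact hkey t ht
  -- change of variables
  have hchg : ∫ t in Set.Ioi 0, g t = (m:ℝ) * ∫ t in Set.Ioi 0, g ((m:ℝ) * t) := by
    have h := integral_comp_mul_left_Ioi g 0 hmR
    rw [mul_zero] at h
    rw [h, smul_eq_mul, ← mul_assoc, mul_inv_cancel₀ hm0, one_mul]
  -- main inequality E[X] ≤ m E[min]
  have hmain : ∫ ω, x0 ω ∂μ ≤ (m:ℝ) * ∫ ω, Y ω ∂μ := by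
    rw [hEX, hEY, hchg]
    apply mul_le_mul_of_nonneg_left _ (Nat.cast_nonneg m)
    exact setIntegral_mono_on hcomp_int hgm_int measurableSet_Ioi (fun t ht => hkey t ht)
  rw [div_le_div_iff₀ hmin_pos hmean_pos, one_mul]
  exact hmain
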